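/- Let k be a field, V and W finite-dimensional k-vector spaces, and let (f, g) be a nilpotent pair, i.e. f : V →ₗ[k] W, g : W →ₗ[k] V with g ∘ f nilpotent. If v ∈ V is balanced, then every vector u in the subspace T[v] is balanced. -/
import Mathlib


/-- `orbitSpan T v` is the submodule `T[v]` spanned by `{T^i v : i ∈ ℕ}`. -/
def orbitSpan {k V : Type*} [Field k] [AddCommGroup V] [Module k V]
    (T : V →ₗ[k] V) (v : V) : Submodule k V :=
  Submodule.span k (Set.range fun i : ℕ => (T ^ i) v)

lemma orbit_key {k V W : Type*} [Field k] [AddCommGroup V] [Module k V]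
    [AddCommGroup W] [Module k W] (f : V →ₗ[k] W) (g : W →ₗ[k] V) (v : V) (i : ℕ) :
    f (((g ∘ₗ f) ^ i) v) = ((f ∘ₗ g) ^ i) (f v) := by
  induction i generalizing v with
  | zero => simp
  | succ n ih =>
    rw [pow_succ, pow_succ]
    simp only [Module.End.mul_apply, LinearMap.comp_apply]
    exact ih (g (f v))

lemma orbitSpan_map {k V W : Type*} [Field k] [AddCommGroup V] [Module k V]
    [AddCommGroup W] [Module k W] (f : V →ₗ[k] W) (g : W →ₗ[k] V) (v : V) :
    Submodule.map f (orbitSpan (g ∘ₗ f) v) = orbitSpan (f ∘ₗ g) (f v) := by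
  unfold orbitSpan
  rw [Submodule.map_span]
  congr 1
  ext w
  simp only [Set.mem_image, Set.mem_range]
  constructor
  · rintro ⟨_, ⟨i, rfl⟩, rfl⟩; exact ⟨i, (orbit_key f g v i).symm⟩
  · rintro ⟨i, rfl⟩; exact ⟨_, ⟨i, rfl⟩, orbit_key f g v i⟩

lemma orbitSpan_le {k V : Type*} [Field k] [AddCommGroup V] [Module k V]
    (T : V →ₗ[k] V) (v u : V) (hu : u ∈ orbitSpan T v) :
    orbitSpan T u ≤ orbitSpan T v := by
  apply Submodule.span_le.mpr
  rintro _ ⟨i, rfl⟩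
  have : Submodule.map (T ^ i) (orbitSpan T v) ≤ orbitSpan T v := by
    unfold orbitSpan
    rw [Submodule.map_span]
    apply Submodule.span_le.mpr
    rintro _ ⟨_, ⟨j, rfl⟩, rfl⟩
    apply Submodule.subset_span
    exact ⟨i + j, by show (T ^ (i + j)) v = (T ^ i) ((T ^ j) v); rw [pow_add]; rfl⟩
  exact this ⟨u, hu, rfl⟩

theorem balanced_of_mem_orbitSpan_of_balanced
    (k V W : Type*) [Field k] [AddCommGroup V] [Module k V] [FiniteDimensional k V]
    [AddCommGroup W] [Module k W] [FiniteDimensional k W]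
    (f : V →ₗ[k] W) (g : W →ₗ[k] V) (hnil : IsNilpotent (g ∘ₗ f))
    (v : V)
    (hv : Module.finrank k (orbitSpan (g ∘ₗ f) v) =
      Module.finrank k (orbitSpan (f ∘ₗ g) (f v)))
    (u : V) (hu : u ∈ orbitSpan (g ∘ₗ f) v) :
    Module.finrank k (orbitSpan (g ∘ₗ f) u) =
      Module.finrank k (orbitSpan (f ∘ₗ g) (f u)) := by
  set p := orbitSpan (g ∘ₗ f) v with hp
  set q := orbitSpan (g ∘ₗ f) u with hq
  have hle : q ≤ p := orbitSpan_le _ v u hu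
  -- f is injective on p
  have hrange : LinearMap.range (f.domRestrict p) = Submodule.map f p := by
    ext w; simp [LinearMap.mem_range, Submodule.mem_map]
  have hrn := LinearMap.finrank_range_add_finrank_ker (f.domRestrict p)
  rw [hrange, orbitSpan_map] at hrn
  have hker0 : Module.finrank k (LinearMap.ker (f.domRestrict p)) = 0 := by omega
  have hker : LinearMap.ker (f.domRestrict p) = ⊥ :=
    Submodule.finrank_eq_zero.mp hker0
  have hinj : ∀ x ∈ p, f x = 0 → x = 0 := by
    intro x hx hfx
    have : (⟨x, hx⟩ : p) ∈ LinearMap.ker (f.domRestrict p) := by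
      simp [LinearMap.mem_ker, hfx]
    rw [hker, Submodule.mem_bot] at this
    exact congrArg Subtype.val this
  -- now for q
  have hkerq : LinearMap.ker (f.domRestrict q) = ⊥ := by
    ext ⟨x, hx⟩
    simp only [LinearMap.mem_ker, LinearMap.domRestrict_apply, Submodule.mem_bot]
    constructor
    · intro hfx
      exact Subtype.ext (hinj x (hle hx) hfx)
    · intro h
      have hx0 : x = 0 := congrArg Subtype.val h
      simp [hx0]
  have hrangeq : LinearMap.range (f.domRestrict q) = Submodule.map f q := by
    ext w; simp [LinearMap.mem_range, Submodule.mem_map]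
  have hrnq := LinearMap.finrank_range_add_finrank_ker (f.domRestrict q)
  rw [hrangeq, orbitSpan_map, hkerq, finrank_bot] at hrnq
  omega
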